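/- Let φᵢⱼ = φⱼᵢ : ℝ³ → ℝ (1 ≤ i,j ≤ 3) be arbitrary smooth functions, and let g be the metric on ℝ⁶ given by g = 2du₁⊗du₄ + 2du₂⊗du₅ + 2du₃⊗du₆ + 2φ₁₂ du₁⊗du₂ + 2φ₁₃ du₁⊗du₃ + 2φ₂₃ du₂⊗du₃ + (φ₁₁ − 2u₁u₃u₅) du₁⊗du₁ + φ₂₂ du₂⊗du₂ + (φ₃₃ − 2(u₁+u₃)u₅) du₃⊗du₃, where the φᵢⱼ are evaluated at (u₁,u₂,u₃). Then at every point of ℝ⁶ and for every tangent vector X ∈ ℝ⁶, the characteristic polynomial of the Szabó operator S(X) : Y ↦ (∇_X R)(Y,X)X of the Levi-Civita connection of g equals λ⁶; that is, g is a pseudo-Riemannian Szabó metric of signature (3,3) with only zero eigenvalues. -/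

import Mathlib

open scoped BigOperators

noncomputable section

variable {ι : Type} [Fintype ι] [DecidableEq ι]

/-- Partial derivative in the `i`-th coordinate direction. -/
def pd (i : ι) (f : (ι → ℝ) → ℝ) : (ι → ℝ) → ℝ :=
  fun p => fderiv ℝ f p (Pi.single i 1)

/-- Curvature components `R^l_{ijk}` of the torsion-free connection with Christoffel
symbols `Γ k i j = Γᵏᵢⱼ`:
`Rˡᵢⱼₖ = ∂ᵢΓˡⱼₖ − ∂ⱼΓˡᵢₖ + Σₘ (Γˡᵢₘ Γᵐⱼₖ − Γˡⱼₘ Γᵐᵢₖ)`. -/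
def curv (Γ : ι → ι → ι → (ι → ℝ) → ℝ) (l i j k : ι) : (ι → ℝ) → ℝ :=
  fun p => pd i (Γ l j k) p - pd j (Γ l i k) p +
    ∑ m, (Γ l i m p * Γ m j k p - Γ l j m p * Γ m i k p)

/-- Components `(∇ₕR)ˡᵢⱼₖ` of the covariant derivative of the curvature. -/
def covR (Γ : ι → ι → ι → (ι → ℝ) → ℝ) (h l i j k : ι) : (ι → ℝ) → ℝ :=
  fun p => pd h (curv Γ l i j k) p +
    ∑ m, (Γ l h m p * curv Γ m i j k p - Γ m h i p * curv Γ l m j k p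
      - Γ m h j p * curv Γ l i m k p - Γ m h k p * curv Γ l i j m p)

/-- The Szabó operator `S(X) : Y ↦ (∇_X R)(Y,X)X` at the point `p`, as a matrix:
`(S(X)Y)ˡ = Σ_{h,i,j,k} Xʰ Yⁱ Xʲ Xᵏ (∇ₕR)ˡᵢⱼₖ`. -/
def szabo (Γ : ι → ι → ι → (ι → ℝ) → ℝ) (p X : ι → ℝ) : Matrix ι ι ℝ :=
  Matrix.of fun l i => ∑ h, ∑ j, ∑ k, X h * X j * X k * covR Γ h l i j k p

/-- Ricci tensor `Ricⱼₖ = Σᵢ Rⁱᵢⱼₖ`. -/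
def ricci (Γ : ι → ι → ι → (ι → ℝ) → ℝ) (j k : ι) : (ι → ℝ) → ℝ :=
  fun p => ∑ i, curv Γ i i j k p

/-- Covariant derivative of the Ricci tensor,
`(∇ᵢRic)ⱼₖ = ∂ᵢRicⱼₖ − Σₘ (Γᵐᵢⱼ Ricₘₖ + Γᵐᵢₖ Ricⱼₘ)`. -/
def covRic (Γ : ι → ι → ι → (ι → ℝ) → ℝ) (i j k : ι) : (ι → ℝ) → ℝ :=
  fun p => pd i (ricci Γ j k) p -
    ∑ m, (Γ m i j p * ricci Γ m k p + Γ m i k p * ricci Γ j m p)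

/-- The Ricci tensor is cyclic parallel at `p`. -/
def CyclicParallelAt (Γ : ι → ι → ι → (ι → ℝ) → ℝ) (p : ι → ℝ) : Prop :=
  ∀ i j k, covRic Γ i j k p + covRic Γ j k i p + covRic Γ k i j p = 0

/-- Christoffel symbols `Γ̃ᶜₐᵦ = ½ Σ_d g̃ᶜᵈ (∂ₐ g̃ᵦ_d + ∂ᵦ g̃ₐ_d − ∂_d g̃ₐᵦ)` of the
Levi-Civita connection of a pseudo-Riemannian metric `g`. -/
def christoffel (g : (ι → ℝ) → Matrix ι ι ℝ) (c a b : ι) : (ι → ℝ) → ℝ :=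
  fun p => (1 / 2) * ∑ d, (g p)⁻¹ c d *
    (pd a (fun q => g q b d) p + pd b (fun q => g q a d) p - pd d (fun q => g q a b) p)

end

/-- The twisted Riemannian extension metric on `ℝ⁶` of the connection with `Γ²₁₁ = u₁u₃`,
`Γ²₃₃ = u₁+u₃`, twisted by a symmetric tensor `φ` (evaluated at `(u₁,u₂,u₃)`):
`g = 2du₁⊗du₄ + 2du₂⊗du₅ + 2du₃⊗du₆ + 2φ₁₂ du₁⊗du₂ + 2φ₁₃ du₁⊗du₃ + 2φ₂₃ du₂⊗du₃
  + (φ₁₁ − 2u₁u₃u₅) du₁⊗du₁ + φ₂₂ du₂⊗du₂ + (φ₃₃ − 2(u₁+u₃)u₅) du₃⊗du₃`. -/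
def gSixTwist (φ : Fin 3 → Fin 3 → (Fin 3 → ℝ) → ℝ) :
    (Fin 6 → ℝ) → Matrix (Fin 6) (Fin 6) ℝ :=
  fun u =>
    !![φ 0 0 ![u 0, u 1, u 2] - 2 * u 0 * u 2 * u 4,
         φ 0 1 ![u 0, u 1, u 2], φ 0 2 ![u 0, u 1, u 2], 1, 0, 0;
       φ 0 1 ![u 0, u 1, u 2], φ 1 1 ![u 0, u 1, u 2], φ 1 2 ![u 0, u 1, u 2], 0, 1, 0;
       φ 0 2 ![u 0, u 1, u 2], φ 1 2 ![u 0, u 1, u 2],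
         φ 2 2 ![u 0, u 1, u 2] - 2 * (u 0 + u 2) * u 4, 0, 0, 1;
       1, 0, 0, 0, 0, 0;
       0, 1, 0, 0, 0, 0;
       0, 0, 1, 0, 0, 0]


namespace S15
noncomputable section

def prj36 : (Fin 6 → ℝ) →L[ℝ] (Fin 3 → ℝ) :=
  ContinuousLinearMap.pi
    ![ContinuousLinearMap.proj 0, ContinuousLinearMap.proj 1, ContinuousLinearMap.proj 2]

theorem prj36_apply (u : Fin 6 → ℝ) : prj36 u = ![u 0, u 1, u 2] := by
  funext s; fin_cases s <;> rfl

theorem pd_const (i : Fin 6) (c : ℝ) (p : Fin 6 → ℝ) : pd i (fun _ => c) p = 0 := by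
  simp [pd]

theorem pd_zero (i : Fin 6) (p : Fin 6 → ℝ) : pd i (0 : (Fin 6 → ℝ) → ℝ) p = 0 := by
  simp [pd, Pi.zero_def]

theorem pd_coord (i j : Fin 6) (p : Fin 6 → ℝ) :
    pd i (fun u => u j) p = if j = i then 1 else 0 := by
  have h : (fun u : Fin 6 → ℝ => u j)
      = (ContinuousLinearMap.proj j : (Fin 6 → ℝ) →L[ℝ] ℝ) := rfl
  rw [pd, h, ContinuousLinearMap.fderiv]
  simp [Pi.single_apply]

theorem pd_add (i : Fin 6) (f g : (Fin 6 → ℝ) → ℝ) (p : Fin 6 → ℝ)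
    (hf : DifferentiableAt ℝ f p) (hg : DifferentiableAt ℝ g p) :
    pd i (fun u => f u + g u) p = pd i f p + pd i g p := by
  rw [pd, fderiv_fun_add hf hg]; simp [pd]

theorem pd_sub (i : Fin 6) (f g : (Fin 6 → ℝ) → ℝ) (p : Fin 6 → ℝ)
    (hf : DifferentiableAt ℝ f p) (hg : DifferentiableAt ℝ g p) :
    pd i (fun u => f u - g u) p = pd i f p - pd i g p := by
  rw [pd, fderiv_fun_sub hf hg]; simp [pd]

theorem pd_neg (i : Fin 6) (f : (Fin 6 → ℝ) → ℝ) (p : Fin 6 → ℝ) :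
    pd i (fun u => -(f u)) p = -(pd i f p) := by
  rw [pd, fderiv_fun_neg]; simp [pd]

theorem pd_mul (i : Fin 6) (f g : (Fin 6 → ℝ) → ℝ) (p : Fin 6 → ℝ)
    (hf : DifferentiableAt ℝ f p) (hg : DifferentiableAt ℝ g p) :
    pd i (fun u => f u * g u) p = pd i f p * g p + f p * pd i g p := by
  rw [pd, fderiv_fun_mul hf hg]; simp [pd]; ring

theorem pd_const_mul (i : Fin 6) (f : (Fin 6 → ℝ) → ℝ) (c : ℝ) (p : Fin 6 → ℝ)
    (hf : DifferentiableAt ℝ f p) :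
    pd i (fun u => c * f u) p = c * pd i f p := by
  rw [pd, fderiv_const_mul hf]; simp [pd]

theorem pd_comp_base (F : (Fin 3 → ℝ) → ℝ) (hF : Differentiable ℝ F) (i : Fin 6) (p : Fin 6 → ℝ) :
    pd i (fun u => F ![u 0, u 1, u 2]) p = fderiv ℝ F ![p 0, p 1, p 2] (prj36 (Pi.single i 1)) := by
  have h1 : (fun u : Fin 6 → ℝ => F ![u 0, u 1, u 2]) = F ∘ prj36 := by
    funext u; simp [Function.comp, prj36_apply]
  rw [pd, h1, fderiv_comp p (hF _) prj36.differentiableAt, prj36.fderiv]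
  simp [prj36_apply]

theorem prj36_single_lt (i : Fin 6) (h : (i : ℕ) < 3) :
    prj36 (Pi.single (i:Fin 6) (1:ℝ)) = Pi.single (⟨i, h⟩ : Fin 3) 1 := by
  funext s
  rw [prj36_apply]
  fin_cases s <;> fin_cases i <;> simp [Pi.single_apply] at h ⊢

theorem prj36_single_ge (i : Fin 6) (h : 3 ≤ (i : ℕ)) :
    prj36 (Pi.single (i:Fin 6) (1:ℝ)) = 0 := by
  funext s
  rw [prj36_apply]
  fin_cases s <;> fin_cases i <;> simp_all [Pi.single_apply]

variable (φ : Fin 3 → Fin 3 → (Fin 3 → ℝ) → ℝ) (hφ : ∀ i j, ContDiff ℝ (⊤:ℕ∞) (φ i j))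

def Pc (i j : Fin 3) : (Fin 6 → ℝ) → ℝ := fun u => φ i j ![u 0, u 1, u 2]

def Dphi (i j : Fin 3) (s : Fin 3) : (Fin 6 → ℝ) → ℝ :=
  fun u => fderiv ℝ (φ i j) ![u 0, u 1, u 2] (Pi.single s 1)

include hφ in
theorem diffP : ∀ i j : Fin 3, Differentiable ℝ (Pc φ i j) := by
  intro i j
  have h : Pc φ i j = (φ i j) ∘ prj36 := by
    funext u; simp [Pc, Function.comp, prj36_apply]
  rw [h]
  exact ((hφ i j).differentiable (by simp)).comp prj36.differentiable

include hφ in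
theorem diffFD (i j : Fin 3) (s : Fin 3) :
    Differentiable ℝ (fun x => fderiv ℝ (φ i j) x (Pi.single s (1:ℝ))) := by
  have h := ((hφ i j).fderiv_right (m := (⊤:ℕ∞)) (by exact_mod_cast le_refl _)).differentiable
    (by simp)
  exact fun x => (h x).clm_apply (differentiableAt_const _)

include hφ in
theorem diffD : ∀ (i j s : Fin 3), Differentiable ℝ (Dphi φ i j s) := by
  intro i j s
  have h : Dphi φ i j s = (fun x => fderiv ℝ (φ i j) x (Pi.single s 1)) ∘ prj36 := by
    funext u; simp [Dphi, Function.comp, prj36_apply]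
  rw [h]
  exact (diffFD φ hφ i j s).comp prj36.differentiable

include hφ in
theorem pdP_lt (i j : Fin 3) (s : Fin 6) (h : (s:ℕ) < 3) (p : Fin 6 → ℝ) :
    pd s (Pc φ i j) p = Dphi φ i j ⟨s, h⟩ p := by
  rw [show Pc φ i j = fun u => φ i j ![u 0, u 1, u 2] from rfl,
    pd_comp_base _ ((hφ i j).differentiable (by simp)), prj36_single_lt s h, Dphi]

include hφ in
theorem pdP_ge (i j : Fin 3) (s : Fin 6) (h : 3 ≤ (s:ℕ)) (p : Fin 6 → ℝ) :
    pd s (Pc φ i j) p = 0 := by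
  rw [show Pc φ i j = fun u => φ i j ![u 0, u 1, u 2] from rfl,
    pd_comp_base _ ((hφ i j).differentiable (by simp)), prj36_single_ge s h, map_zero]

include hφ in
theorem pdD_ge (i j t : Fin 3) (s : Fin 6) (h : 3 ≤ (s:ℕ)) (p : Fin 6 → ℝ) :
    pd s (Dphi φ i j t) p = 0 := by
  rw [show Dphi φ i j t
      = fun u => (fun x => fderiv ℝ (φ i j) x (Pi.single t 1)) ![u 0, u 1, u 2] from rfl]
  rw [pd_comp_base _ (diffFD φ hφ i j t), prj36_single_ge s h, map_zero]

def Ginv : (Fin 6 → ℝ) → Matrix (Fin 6) (Fin 6) ℝ := fun u =>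
  !![0, 0, 0, 1, 0, 0;
     0, 0, 0, 0, 1, 0;
     0, 0, 0, 0, 0, 1;
     1, 0, 0, -(φ 0 0 ![u 0, u 1, u 2] - 2 * u 0 * u 2 * u 4), -(φ 0 1 ![u 0, u 1, u 2]), -(φ 0 2 ![u 0, u 1, u 2]);
     0, 1, 0, -(φ 0 1 ![u 0, u 1, u 2]), -(φ 1 1 ![u 0, u 1, u 2]), -(φ 1 2 ![u 0, u 1, u 2]);
     0, 0, 1, -(φ 0 2 ![u 0, u 1, u 2]), -(φ 1 2 ![u 0, u 1, u 2]), -(φ 2 2 ![u 0, u 1, u 2] - 2 * (u 0 + u 2) * u 4)]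


theorem gval_00 (p : Fin 6 → ℝ) : gSixTwist φ p 0 0 = Pc φ 0 0 p - 2 * p 0 * p 2 * p 4 := rfl

theorem givl_00 (p : Fin 6 → ℝ) : Ginv φ p 0 0 = 0 := rfl

theorem gfun_00 : (fun q : Fin 6 → ℝ => gSixTwist φ q 0 0) = fun q => Pc φ 0 0 q - 2 * q 0 * q 2 * q 4 := rfl

theorem gval_01 (p : Fin 6 → ℝ) : gSixTwist φ p 0 1 = Pc φ 0 1 p := rfl

theorem givl_01 (p : Fin 6 → ℝ) : Ginv φ p 0 1 = 0 := rfl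

theorem gfun_01 : (fun q : Fin 6 → ℝ => gSixTwist φ q 0 1) = fun q => Pc φ 0 1 q := rfl

theorem gval_02 (p : Fin 6 → ℝ) : gSixTwist φ p 0 2 = Pc φ 0 2 p := rfl

theorem givl_02 (p : Fin 6 → ℝ) : Ginv φ p 0 2 = 0 := rfl

theorem gfun_02 : (fun q : Fin 6 → ℝ => gSixTwist φ q 0 2) = fun q => Pc φ 0 2 q := rfl

theorem gval_03 (p : Fin 6 → ℝ) : gSixTwist φ p 0 3 = 1 := rfl

theorem givl_03 (p : Fin 6 → ℝ) : Ginv φ p 0 3 = 1 := rfl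

theorem gfun_03 : (fun q : Fin 6 → ℝ => gSixTwist φ q 0 3) = fun q => 1 := rfl

theorem gval_04 (p : Fin 6 → ℝ) : gSixTwist φ p 0 4 = 0 := rfl

theorem givl_04 (p : Fin 6 → ℝ) : Ginv φ p 0 4 = 0 := rfl

theorem gfun_04 : (fun q : Fin 6 → ℝ => gSixTwist φ q 0 4) = fun q => 0 := rfl

theorem gval_05 (p : Fin 6 → ℝ) : gSixTwist φ p 0 5 = 0 := rfl

theorem givl_05 (p : Fin 6 → ℝ) : Ginv φ p 0 5 = 0 := rfl

theorem gfun_05 : (fun q : Fin 6 → ℝ => gSixTwist φ q 0 5) = fun q => 0 := rfl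

theorem gval_10 (p : Fin 6 → ℝ) : gSixTwist φ p 1 0 = Pc φ 0 1 p := rfl

theorem givl_10 (p : Fin 6 → ℝ) : Ginv φ p 1 0 = 0 := rfl

theorem gfun_10 : (fun q : Fin 6 → ℝ => gSixTwist φ q 1 0) = fun q => Pc φ 0 1 q := rfl

theorem gval_11 (p : Fin 6 → ℝ) : gSixTwist φ p 1 1 = Pc φ 1 1 p := rfl

theorem givl_11 (p : Fin 6 → ℝ) : Ginv φ p 1 1 = 0 := rfl

theorem gfun_11 : (fun q : Fin 6 → ℝ => gSixTwist φ q 1 1) = fun q => Pc φ 1 1 q := rfl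

theorem gval_12 (p : Fin 6 → ℝ) : gSixTwist φ p 1 2 = Pc φ 1 2 p := rfl

theorem givl_12 (p : Fin 6 → ℝ) : Ginv φ p 1 2 = 0 := rfl

theorem gfun_12 : (fun q : Fin 6 → ℝ => gSixTwist φ q 1 2) = fun q => Pc φ 1 2 q := rfl

theorem gval_13 (p : Fin 6 → ℝ) : gSixTwist φ p 1 3 = 0 := rfl

theorem givl_13 (p : Fin 6 → ℝ) : Ginv φ p 1 3 = 0 := rfl

theorem gfun_13 : (fun q : Fin 6 → ℝ => gSixTwist φ q 1 3) = fun q => 0 := rfl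

theorem gval_14 (p : Fin 6 → ℝ) : gSixTwist φ p 1 4 = 1 := rfl

theorem givl_14 (p : Fin 6 → ℝ) : Ginv φ p 1 4 = 1 := rfl

theorem gfun_14 : (fun q : Fin 6 → ℝ => gSixTwist φ q 1 4) = fun q => 1 := rfl

theorem gval_15 (p : Fin 6 → ℝ) : gSixTwist φ p 1 5 = 0 := rfl

theorem givl_15 (p : Fin 6 → ℝ) : Ginv φ p 1 5 = 0 := rfl

theorem gfun_15 : (fun q : Fin 6 → ℝ => gSixTwist φ q 1 5) = fun q => 0 := rfl

theorem gval_20 (p : Fin 6 → ℝ) : gSixTwist φ p 2 0 = Pc φ 0 2 p := rfl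

theorem givl_20 (p : Fin 6 → ℝ) : Ginv φ p 2 0 = 0 := rfl

theorem gfun_20 : (fun q : Fin 6 → ℝ => gSixTwist φ q 2 0) = fun q => Pc φ 0 2 q := rfl

theorem gval_21 (p : Fin 6 → ℝ) : gSixTwist φ p 2 1 = Pc φ 1 2 p := rfl

theorem givl_21 (p : Fin 6 → ℝ) : Ginv φ p 2 1 = 0 := rfl

theorem gfun_21 : (fun q : Fin 6 → ℝ => gSixTwist φ q 2 1) = fun q => Pc φ 1 2 q := rfl

theorem gval_22 (p : Fin 6 → ℝ) : gSixTwist φ p 2 2 = Pc φ 2 2 p - 2 * (p 0 + p 2) * p 4 := rfl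

theorem givl_22 (p : Fin 6 → ℝ) : Ginv φ p 2 2 = 0 := rfl

theorem gfun_22 : (fun q : Fin 6 → ℝ => gSixTwist φ q 2 2) = fun q => Pc φ 2 2 q - 2 * (q 0 + q 2) * q 4 := rfl

theorem gval_23 (p : Fin 6 → ℝ) : gSixTwist φ p 2 3 = 0 := rfl

theorem givl_23 (p : Fin 6 → ℝ) : Ginv φ p 2 3 = 0 := rfl

theorem gfun_23 : (fun q : Fin 6 → ℝ => gSixTwist φ q 2 3) = fun q => 0 := rfl

theorem gval_24 (p : Fin 6 → ℝ) : gSixTwist φ p 2 4 = 0 := rfl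

theorem givl_24 (p : Fin 6 → ℝ) : Ginv φ p 2 4 = 0 := rfl

theorem gfun_24 : (fun q : Fin 6 → ℝ => gSixTwist φ q 2 4) = fun q => 0 := rfl

theorem gval_25 (p : Fin 6 → ℝ) : gSixTwist φ p 2 5 = 1 := rfl

theorem givl_25 (p : Fin 6 → ℝ) : Ginv φ p 2 5 = 1 := rfl

theorem gfun_25 : (fun q : Fin 6 → ℝ => gSixTwist φ q 2 5) = fun q => 1 := rfl

theorem gval_30 (p : Fin 6 → ℝ) : gSixTwist φ p 3 0 = 1 := rfl

theorem givl_30 (p : Fin 6 → ℝ) : Ginv φ p 3 0 = 1 := rfl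

theorem gfun_30 : (fun q : Fin 6 → ℝ => gSixTwist φ q 3 0) = fun q => 1 := rfl

theorem gval_31 (p : Fin 6 → ℝ) : gSixTwist φ p 3 1 = 0 := rfl

theorem givl_31 (p : Fin 6 → ℝ) : Ginv φ p 3 1 = 0 := rfl

theorem gfun_31 : (fun q : Fin 6 → ℝ => gSixTwist φ q 3 1) = fun q => 0 := rfl

theorem gval_32 (p : Fin 6 → ℝ) : gSixTwist φ p 3 2 = 0 := rfl

theorem givl_32 (p : Fin 6 → ℝ) : Ginv φ p 3 2 = 0 := rfl

theorem gfun_32 : (fun q : Fin 6 → ℝ => gSixTwist φ q 3 2) = fun q => 0 := rfl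

theorem gval_33 (p : Fin 6 → ℝ) : gSixTwist φ p 3 3 = 0 := rfl

theorem givl_33 (p : Fin 6 → ℝ) : Ginv φ p 3 3 = -(Pc φ 0 0 p - 2 * p 0 * p 2 * p 4) := rfl

theorem gfun_33 : (fun q : Fin 6 → ℝ => gSixTwist φ q 3 3) = fun q => 0 := rfl

theorem gval_34 (p : Fin 6 → ℝ) : gSixTwist φ p 3 4 = 0 := rfl

theorem givl_34 (p : Fin 6 → ℝ) : Ginv φ p 3 4 = -(Pc φ 0 1 p) := rfl

theorem gfun_34 : (fun q : Fin 6 → ℝ => gSixTwist φ q 3 4) = fun q => 0 := rfl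

theorem gval_35 (p : Fin 6 → ℝ) : gSixTwist φ p 3 5 = 0 := rfl

theorem givl_35 (p : Fin 6 → ℝ) : Ginv φ p 3 5 = -(Pc φ 0 2 p) := rfl

theorem gfun_35 : (fun q : Fin 6 → ℝ => gSixTwist φ q 3 5) = fun q => 0 := rfl

theorem gval_40 (p : Fin 6 → ℝ) : gSixTwist φ p 4 0 = 0 := rfl

theorem givl_40 (p : Fin 6 → ℝ) : Ginv φ p 4 0 = 0 := rfl

theorem gfun_40 : (fun q : Fin 6 → ℝ => gSixTwist φ q 4 0) = fun q => 0 := rfl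

theorem gval_41 (p : Fin 6 → ℝ) : gSixTwist φ p 4 1 = 1 := rfl

theorem givl_41 (p : Fin 6 → ℝ) : Ginv φ p 4 1 = 1 := rfl

theorem gfun_41 : (fun q : Fin 6 → ℝ => gSixTwist φ q 4 1) = fun q => 1 := rfl

theorem gval_42 (p : Fin 6 → ℝ) : gSixTwist φ p 4 2 = 0 := rfl

theorem givl_42 (p : Fin 6 → ℝ) : Ginv φ p 4 2 = 0 := rfl

theorem gfun_42 : (fun q : Fin 6 → ℝ => gSixTwist φ q 4 2) = fun q => 0 := rfl

theorem gval_43 (p : Fin 6 → ℝ) : gSixTwist φ p 4 3 = 0 := rfl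

theorem givl_43 (p : Fin 6 → ℝ) : Ginv φ p 4 3 = -(Pc φ 0 1 p) := rfl

theorem gfun_43 : (fun q : Fin 6 → ℝ => gSixTwist φ q 4 3) = fun q => 0 := rfl

theorem gval_44 (p : Fin 6 → ℝ) : gSixTwist φ p 4 4 = 0 := rfl

theorem givl_44 (p : Fin 6 → ℝ) : Ginv φ p 4 4 = -(Pc φ 1 1 p) := rfl

theorem gfun_44 : (fun q : Fin 6 → ℝ => gSixTwist φ q 4 4) = fun q => 0 := rfl

theorem gval_45 (p : Fin 6 → ℝ) : gSixTwist φ p 4 5 = 0 := rfl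

theorem givl_45 (p : Fin 6 → ℝ) : Ginv φ p 4 5 = -(Pc φ 1 2 p) := rfl

theorem gfun_45 : (fun q : Fin 6 → ℝ => gSixTwist φ q 4 5) = fun q => 0 := rfl

theorem gval_50 (p : Fin 6 → ℝ) : gSixTwist φ p 5 0 = 0 := rfl

theorem givl_50 (p : Fin 6 → ℝ) : Ginv φ p 5 0 = 0 := rfl

theorem gfun_50 : (fun q : Fin 6 → ℝ => gSixTwist φ q 5 0) = fun q => 0 := rfl

theorem gval_51 (p : Fin 6 → ℝ) : gSixTwist φ p 5 1 = 0 := rfl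

theorem givl_51 (p : Fin 6 → ℝ) : Ginv φ p 5 1 = 0 := rfl

theorem gfun_51 : (fun q : Fin 6 → ℝ => gSixTwist φ q 5 1) = fun q => 0 := rfl

theorem gval_52 (p : Fin 6 → ℝ) : gSixTwist φ p 5 2 = 1 := rfl

theorem givl_52 (p : Fin 6 → ℝ) : Ginv φ p 5 2 = 1 := rfl

theorem gfun_52 : (fun q : Fin 6 → ℝ => gSixTwist φ q 5 2) = fun q => 1 := rfl

theorem gval_53 (p : Fin 6 → ℝ) : gSixTwist φ p 5 3 = 0 := rfl

theorem givl_53 (p : Fin 6 → ℝ) : Ginv φ p 5 3 = -(Pc φ 0 2 p) := rfl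

theorem gfun_53 : (fun q : Fin 6 → ℝ => gSixTwist φ q 5 3) = fun q => 0 := rfl

theorem gval_54 (p : Fin 6 → ℝ) : gSixTwist φ p 5 4 = 0 := rfl

theorem givl_54 (p : Fin 6 → ℝ) : Ginv φ p 5 4 = -(Pc φ 1 2 p) := rfl

theorem gfun_54 : (fun q : Fin 6 → ℝ => gSixTwist φ q 5 4) = fun q => 0 := rfl

theorem gval_55 (p : Fin 6 → ℝ) : gSixTwist φ p 5 5 = 0 := rfl

theorem givl_55 (p : Fin 6 → ℝ) : Ginv φ p 5 5 = -(Pc φ 2 2 p - 2 * (p 0 + p 2) * p 4) := rfl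

theorem gfun_55 : (fun q : Fin 6 → ℝ => gSixTwist φ q 5 5) = fun q => 0 := rfl


set_option maxHeartbeats 1000000 in
theorem ginv_eq (p : Fin 6 → ℝ) : (gSixTwist φ p)⁻¹ = Ginv φ p := by
  apply Matrix.inv_eq_right_inv
  ext i j
  rw [Matrix.mul_apply, Fin.sum_univ_six]
  fin_cases i <;> fin_cases j <;>
    simp only [Fin.reduceFinMk, gval_00 φ, gval_01 φ, gval_02 φ, gval_03 φ, gval_04 φ, gval_05 φ, gval_10 φ, gval_11 φ, gval_12 φ, gval_13 φ, gval_14 φ, gval_15 φ, gval_20 φ, gval_21 φ, gval_22 φ, gval_23 φ, gval_24 φ, gval_25 φ, gval_30 φ, gval_31 φ, gval_32 φ, gval_33 φ, gval_34 φ, gval_35 φ, gval_40 φ, gval_41 φ, gval_42 φ, gval_43 φ, gval_44 φ, gval_45 φ, gval_50 φ, gval_51 φ, gval_52 φ, gval_53 φ, gval_54 φ, gval_55 φ,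
      givl_00 φ, givl_01 φ, givl_02 φ, givl_03 φ, givl_04 φ, givl_05 φ, givl_10 φ, givl_11 φ, givl_12 φ, givl_13 φ, givl_14 φ, givl_15 φ, givl_20 φ, givl_21 φ, givl_22 φ, givl_23 φ, givl_24 φ, givl_25 φ, givl_30 φ, givl_31 φ, givl_32 φ, givl_33 φ, givl_34 φ, givl_35 φ, givl_40 φ, givl_41 φ, givl_42 φ, givl_43 φ, givl_44 φ, givl_45 φ, givl_50 φ, givl_51 φ, givl_52 φ, givl_53 φ, givl_54 φ, givl_55 φ, Matrix.one_apply, Fin.reduceEq, reduceIte, Fin.isValue] <;>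
    norm_num


include hφ in
theorem pdP0 (i j : Fin 3) (p : Fin 6 → ℝ) :
    pd (0:Fin 6) (Pc φ i j) p = Dphi φ i j 0 p := by
  rw [pdP_lt φ hφ i j 0 (by decide)]; rfl

include hφ in
theorem pdP1 (i j : Fin 3) (p : Fin 6 → ℝ) :
    pd (1:Fin 6) (Pc φ i j) p = Dphi φ i j 1 p := by
  rw [pdP_lt φ hφ i j 1 (by decide)]; rfl

include hφ in
theorem pdP2 (i j : Fin 3) (p : Fin 6 → ℝ) :
    pd (2:Fin 6) (Pc φ i j) p = Dphi φ i j 2 p := by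
  rw [pdP_lt φ hφ i j 2 (by decide)]; rfl

include hφ in
theorem pdP3 (i j : Fin 3) (p : Fin 6 → ℝ) :
    pd (3:Fin 6) (Pc φ i j) p = 0 :=
  pdP_ge φ hφ i j 3 (by decide) p

include hφ in
theorem pdP4 (i j : Fin 3) (p : Fin 6 → ℝ) :
    pd (4:Fin 6) (Pc φ i j) p = 0 :=
  pdP_ge φ hφ i j 4 (by decide) p

include hφ in
theorem pdP5 (i j : Fin 3) (p : Fin 6 → ℝ) :
    pd (5:Fin 6) (Pc φ i j) p = 0 :=
  pdP_ge φ hφ i j 5 (by decide) p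

include hφ in
theorem pdD3 (i j t : Fin 3) (p : Fin 6 → ℝ) :
    pd (3:Fin 6) (Dphi φ i j t) p = 0 :=
  pdD_ge φ hφ i j t 3 (by decide) p

include hφ in
theorem pdD4 (i j t : Fin 3) (p : Fin 6 → ℝ) :
    pd (4:Fin 6) (Dphi φ i j t) p = 0 :=
  pdD_ge φ hφ i j t 4 (by decide) p

include hφ in
theorem pdD5 (i j t : Fin 3) (p : Fin 6 → ℝ) :
    pd (5:Fin 6) (Dphi φ i j t) p = 0 :=
  pdD_ge φ hφ i j t 5 (by decide) p
def GamBB : Fin 3 → Fin 3 → Fin 3 → (Fin 6 → ℝ) → ℝ :=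
  ![![![fun u => (1/2) * (Dphi φ 0 0 0 u + Dphi φ 0 0 0 u - Dphi φ 0 0 0 u) + -(u 2 * u 4) + -(Pc φ 0 1 u * (u 0 * u 2)),
      fun u => (1/2) * (Dphi φ 0 1 0 u + Dphi φ 0 0 1 u - Dphi φ 0 1 0 u),
      fun u => (1/2) * (Dphi φ 0 2 0 u + Dphi φ 0 0 2 u - Dphi φ 0 2 0 u) + -(u 0 * u 4)],
     ![fun u => (1/2) * (Dphi φ 0 0 1 u + Dphi φ 0 1 0 u - Dphi φ 0 1 0 u),
      fun u => (1/2) * (Dphi φ 0 1 1 u + Dphi φ 0 1 1 u - Dphi φ 1 1 0 u),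
      fun u => (1/2) * (Dphi φ 0 2 1 u + Dphi φ 0 1 2 u - Dphi φ 1 2 0 u)],
     ![fun u => (1/2) * (Dphi φ 0 0 2 u + Dphi φ 0 2 0 u - Dphi φ 0 2 0 u) + -(u 0 * u 4),
      fun u => (1/2) * (Dphi φ 0 1 2 u + Dphi φ 0 2 1 u - Dphi φ 1 2 0 u),
      fun u => (1/2) * (Dphi φ 0 2 2 u + Dphi φ 0 2 2 u - Dphi φ 2 2 0 u) + u 4 + -(Pc φ 0 1 u * (u 0 + u 2))]],
   ![![fun u => (1/2) * (Dphi φ 0 1 0 u + Dphi φ 0 1 0 u - Dphi φ 0 0 1 u) + -(Pc φ 1 1 u * (u 0 * u 2)),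
      fun u => (1/2) * (Dphi φ 1 1 0 u + Dphi φ 0 1 1 u - Dphi φ 0 1 1 u),
      fun u => (1/2) * (Dphi φ 1 2 0 u + Dphi φ 0 1 2 u - Dphi φ 0 2 1 u)],
     ![fun u => (1/2) * (Dphi φ 0 1 1 u + Dphi φ 1 1 0 u - Dphi φ 0 1 1 u),
      fun u => (1/2) * (Dphi φ 1 1 1 u + Dphi φ 1 1 1 u - Dphi φ 1 1 1 u),
      fun u => (1/2) * (Dphi φ 1 2 1 u + Dphi φ 1 1 2 u - Dphi φ 1 2 1 u)],
     ![fun u => (1/2) * (Dphi φ 0 1 2 u + Dphi φ 1 2 0 u - Dphi φ 0 2 1 u),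
      fun u => (1/2) * (Dphi φ 1 1 2 u + Dphi φ 1 2 1 u - Dphi φ 1 2 1 u),
      fun u => (1/2) * (Dphi φ 1 2 2 u + Dphi φ 1 2 2 u - Dphi φ 2 2 1 u) + -(Pc φ 1 1 u * (u 0 + u 2))]],
   ![![fun u => (1/2) * (Dphi φ 0 2 0 u + Dphi φ 0 2 0 u - Dphi φ 0 0 2 u) + u 0 * u 4 + -(Pc φ 1 2 u * (u 0 * u 2)),
      fun u => (1/2) * (Dphi φ 1 2 0 u + Dphi φ 0 2 1 u - Dphi φ 0 1 2 u),
      fun u => (1/2) * (Dphi φ 2 2 0 u + Dphi φ 0 2 2 u - Dphi φ 0 2 2 u) + -(u 4)],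
     ![fun u => (1/2) * (Dphi φ 0 2 1 u + Dphi φ 1 2 0 u - Dphi φ 0 1 2 u),
      fun u => (1/2) * (Dphi φ 1 2 1 u + Dphi φ 1 2 1 u - Dphi φ 1 1 2 u),
      fun u => (1/2) * (Dphi φ 2 2 1 u + Dphi φ 1 2 2 u - Dphi φ 1 2 2 u)],
     ![fun u => (1/2) * (Dphi φ 0 2 2 u + Dphi φ 2 2 0 u - Dphi φ 0 2 2 u) + -(u 4),
      fun u => (1/2) * (Dphi φ 1 2 2 u + Dphi φ 2 2 1 u - Dphi φ 1 2 2 u),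
      fun u => (1/2) * (Dphi φ 2 2 2 u + Dphi φ 2 2 2 u - Dphi φ 2 2 2 u) + -(u 4) + -(Pc φ 1 2 u * (u 0 + u 2))]]]

def gb1 : Fin 6 → Fin 6 → (Fin 6 → ℝ) → ℝ := fun a b =>
  if a = 0 ∧ b = 0 then (fun u => u 0 * u 2)
  else if a = 2 ∧ b = 2 then (fun u => u 0 + u 2) else 0

def mixv : Fin 3 → Fin 6 → (Fin 6 → ℝ) → ℝ := fun c x =>
  if c = 0 ∧ x = 0 then (fun u => -(u 0 * u 2))
  else if c = 2 ∧ x = 2 then (fun u => -(u 0 + u 2)) else 0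

def fmap : Fin 6 → Fin 3 := fun c => if c = 3 then 0 else if c = 4 then 1 else 2
def bmap : Fin 6 → Fin 3 := fun a => if a = 0 then 0 else if a = 1 then 1 else 2

def RF : Fin 3 → Fin 6 → Fin 6 → (Fin 6 → ℝ) → ℝ := fun c a b =>
  if a = 3 ∨ a = 5 ∨ b = 3 ∨ b = 5 then 0
  else if a = 4 then mixv c b
  else if b = 4 then mixv c a
  else GamBB φ c (bmap a) (bmap b)

def Gam : Fin 6 → Fin 6 → Fin 6 → (Fin 6 → ℝ) → ℝ := fun c a b =>
  if c = 0 ∨ c = 2 then 0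
  else if c = 1 then gb1 a b
  else RF φ (fmap c) a b


set_option maxHeartbeats 4000000 in
include hφ in
theorem hGam : christoffel (gSixTwist φ) = Gam φ := by
  have hp := diffP φ hφ
  have hd := diffD φ hφ
  funext c a b p
  fin_cases c <;> fin_cases a <;> fin_cases b <;>
    (try simp only [christoffel, ginv_eq φ, Fin.sum_univ_six, Fin.reduceFinMk, Fin.isValue,
      givl_00 φ, givl_01 φ, givl_02 φ, givl_03 φ, givl_04 φ, givl_05 φ, givl_10 φ, givl_11 φ, givl_12 φ, givl_13 φ, givl_14 φ, givl_15 φ, givl_20 φ, givl_21 φ, givl_22 φ, givl_23 φ, givl_24 φ, givl_25 φ, givl_30 φ, givl_31 φ, givl_32 φ, givl_33 φ, givl_34 φ, givl_35 φ, givl_40 φ, givl_41 φ, givl_42 φ, givl_43 φ, givl_44 φ, givl_45 φ, givl_50 φ, givl_51 φ, givl_52 φ, givl_53 φ, givl_54 φ, givl_55 φ,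
      gfun_00 φ, gfun_01 φ, gfun_02 φ, gfun_03 φ, gfun_04 φ, gfun_05 φ, gfun_10 φ, gfun_11 φ, gfun_12 φ, gfun_13 φ, gfun_14 φ, gfun_15 φ, gfun_20 φ, gfun_21 φ, gfun_22 φ, gfun_23 φ, gfun_24 φ, gfun_25 φ, gfun_30 φ, gfun_31 φ, gfun_32 φ, gfun_33 φ, gfun_34 φ, gfun_35 φ, gfun_40 φ, gfun_41 φ, gfun_42 φ, gfun_43 φ, gfun_44 φ, gfun_45 φ, gfun_50 φ, gfun_51 φ, gfun_52 φ, gfun_53 φ, gfun_54 φ, gfun_55 φ]) <;>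
    (try simp (disch := fun_prop) only [pd_sub, pd_add, pd_mul, pd_const_mul, pd_neg, pd_const, pd_coord, pdP0 φ hφ, pdP1 φ hφ, pdP2 φ hφ, pdP3 φ hφ, pdP4 φ hφ, pdP5 φ hφ, Fin.reduceEq, reduceIte]) <;>
    (try simp only [Gam, RF, GamBB, gb1, mixv, fmap, bmap, Matrix.cons_val_zero, Matrix.cons_val_one, Matrix.cons_val_two, Matrix.head_cons, Matrix.tail_cons, Fin.reduceEq, reduceIte, Fin.isValue, false_and, true_and, and_true, and_false, if_true, if_false, or_self, false_or, true_or, or_false, or_true, Pi.zero_apply]) <;>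
    (try norm_num) <;> (try ring)

-- ---------- uniform Gam facts ----------
theorem G0 (a b : Fin 6) : Gam φ 0 a b = 0 := by simp [Gam]
theorem G2 (a b : Fin 6) : Gam φ 2 a b = 0 := by simp [Gam]
theorem G1 (a b : Fin 6) : Gam φ 1 a b = gb1 a b := by simp [Gam]
theorem G3 (a b : Fin 6) : Gam φ 3 a b = RF φ 0 a b := by simp [Gam, fmap]
theorem G4 (a b : Fin 6) : Gam φ 4 a b = RF φ 1 a b := by simp [Gam, fmap]
theorem G5 (a b : Fin 6) : Gam φ 5 a b = RF φ 2 a b := by simp [Gam, fmap]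

theorem gb1_r1 (a : Fin 6) : gb1 a 1 = 0 := by simp [gb1]
theorem gb1_r3 (a : Fin 6) : gb1 a 3 = 0 := by simp [gb1]
theorem gb1_r4 (a : Fin 6) : gb1 a 4 = 0 := by simp [gb1]
theorem gb1_r5 (a : Fin 6) : gb1 a 5 = 0 := by simp [gb1]
theorem gb1_l1 (b : Fin 6) : gb1 1 b = 0 := by simp [gb1]
theorem gb1_l3 (b : Fin 6) : gb1 3 b = 0 := by simp [gb1]
theorem gb1_l4 (b : Fin 6) : gb1 4 b = 0 := by simp [gb1]
theorem gb1_l5 (b : Fin 6) : gb1 5 b = 0 := by simp [gb1]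

theorem RF_a3 (c : Fin 3) (b : Fin 6) : RF φ c 3 b = 0 := by simp [RF]
theorem RF_a5 (c : Fin 3) (b : Fin 6) : RF φ c 5 b = 0 := by simp [RF]
theorem RF_b3 (c : Fin 3) (a : Fin 6) : RF φ c a 3 = 0 := by simp [RF]
theorem RF_b5 (c : Fin 3) (a : Fin 6) : RF φ c a 5 = 0 := by simp [RF]
theorem RF_l44 (b : Fin 6) : RF φ 1 4 b = 0 := by simp [RF, mixv]
theorem RF_r44 (a : Fin 6) : RF φ 1 a 4 = 0 := by simp [RF, mixv]

theorem Gam_a3 (c : Fin 6) (b : Fin 6) : Gam φ c 3 b = 0 := by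
  unfold Gam; split_ifs <;> simp [gb1, RF]
theorem Gam_a5 (c : Fin 6) (b : Fin 6) : Gam φ c 5 b = 0 := by
  unfold Gam; split_ifs <;> simp [gb1, RF]
theorem Gam_b3 (c : Fin 6) (a : Fin 6) : Gam φ c a 3 = 0 := by
  unfold Gam; split_ifs <;> simp [gb1, RF]
theorem Gam_b5 (c : Fin 6) (a : Fin 6) : Gam φ c a 5 = 0 := by
  unfold Gam; split_ifs <;> simp [gb1, RF]

-- ---------- pd of the polynomial pieces ----------
theorem pdgb1_1 (a b : Fin 6) (p : Fin 6 → ℝ) : pd (1:Fin 6) (gb1 a b) p = 0 := by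
  unfold gb1; split_ifs <;>
    simp (disch := fun_prop) only [pd_mul, pd_add, pd_coord, pd_zero,
      Fin.reduceEq, reduceIte] <;> norm_num
theorem pdgb1_3 (a b : Fin 6) (p : Fin 6 → ℝ) : pd (3:Fin 6) (gb1 a b) p = 0 := by
  unfold gb1; split_ifs <;>
    simp (disch := fun_prop) only [pd_mul, pd_add, pd_coord, pd_zero,
      Fin.reduceEq, reduceIte] <;> norm_num
theorem pdgb1_4 (a b : Fin 6) (p : Fin 6 → ℝ) : pd (4:Fin 6) (gb1 a b) p = 0 := by
  unfold gb1; split_ifs <;>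
    simp (disch := fun_prop) only [pd_mul, pd_add, pd_coord, pd_zero,
      Fin.reduceEq, reduceIte] <;> norm_num
theorem pdgb1_5 (a b : Fin 6) (p : Fin 6 → ℝ) : pd (5:Fin 6) (gb1 a b) p = 0 := by
  unfold gb1; split_ifs <;>
    simp (disch := fun_prop) only [pd_mul, pd_add, pd_coord, pd_zero,
      Fin.reduceEq, reduceIte] <;> norm_num

theorem pdmix3 (c : Fin 3) (x : Fin 6) (p : Fin 6 → ℝ) : pd (3:Fin 6) (mixv c x) p = 0 := by
  unfold mixv; split_ifs <;>
    simp (disch := fun_prop) only [pd_mul, pd_add, pd_neg, pd_coord, pd_zero,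
      Fin.reduceEq, reduceIte] <;> norm_num
theorem pdmix4 (c : Fin 3) (x : Fin 6) (p : Fin 6 → ℝ) : pd (4:Fin 6) (mixv c x) p = 0 := by
  unfold mixv; split_ifs <;>
    simp (disch := fun_prop) only [pd_mul, pd_add, pd_neg, pd_coord, pd_zero,
      Fin.reduceEq, reduceIte] <;> norm_num
theorem pdmix5 (c : Fin 3) (x : Fin 6) (p : Fin 6 → ℝ) : pd (5:Fin 6) (mixv c x) p = 0 := by
  unfold mixv; split_ifs <;>
    simp (disch := fun_prop) only [pd_mul, pd_add, pd_neg, pd_coord, pd_zero,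
      Fin.reduceEq, reduceIte] <;> norm_num

-- ---------- fibre-direction derivatives of GamBB ----------
set_option maxHeartbeats 1000000 in
include hφ in
theorem pdBB3 (c a b : Fin 3) (p : Fin 6 → ℝ) : pd (3:Fin 6) (GamBB φ c a b) p = 0 := by
  have hp := diffP φ hφ
  have hd := diffD φ hφ
  fin_cases c <;> fin_cases a <;> fin_cases b <;>
    simp only [GamBB, Matrix.cons_val_zero, Matrix.cons_val_one, Matrix.cons_val_two,
      Matrix.head_cons, Matrix.tail_cons, Fin.reduceFinMk, Fin.isValue] <;>
    simp (disch := fun_prop) only [pd_add, pd_sub, pd_mul, pd_const_mul, pd_neg, pd_const,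
      pd_coord, pdP3 φ hφ, pdD3 φ hφ, Fin.reduceEq, reduceIte] <;> norm_num

set_option maxHeartbeats 1000000 in
include hφ in
theorem pdBB5 (c a b : Fin 3) (p : Fin 6 → ℝ) : pd (5:Fin 6) (GamBB φ c a b) p = 0 := by
  have hp := diffP φ hφ
  have hd := diffD φ hφ
  fin_cases c <;> fin_cases a <;> fin_cases b <;>
    simp only [GamBB, Matrix.cons_val_zero, Matrix.cons_val_one, Matrix.cons_val_two,
      Matrix.head_cons, Matrix.tail_cons, Fin.reduceFinMk, Fin.isValue] <;>
    simp (disch := fun_prop) only [pd_add, pd_sub, pd_mul, pd_const_mul, pd_neg, pd_const,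
      pd_coord, pdP5 φ hφ, pdD5 φ hφ, Fin.reduceEq, reduceIte] <;> norm_num

set_option maxHeartbeats 1000000 in
include hφ in
theorem pdBB4 (a b : Fin 3) (p : Fin 6 → ℝ) : pd (4:Fin 6) (GamBB φ 1 a b) p = 0 := by
  have hp := diffP φ hφ
  have hd := diffD φ hφ
  fin_cases a <;> fin_cases b <;>
    simp only [GamBB, Matrix.cons_val_zero, Matrix.cons_val_one, Matrix.cons_val_two,
      Matrix.head_cons, Matrix.tail_cons, Fin.reduceFinMk, Fin.isValue] <;>
    simp (disch := fun_prop) only [pd_add, pd_sub, pd_mul, pd_const_mul, pd_neg, pd_const,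
      pd_coord, pdP4 φ hφ, pdD4 φ hφ, Fin.reduceEq, reduceIte] <;> norm_num

include hφ in
theorem pdRF3 (c : Fin 3) (a b : Fin 6) (p : Fin 6 → ℝ) : pd (3:Fin 6) (RF φ c a b) p = 0 := by
  unfold RF; split_ifs <;>
    first
      | exact pd_zero _ _
      | exact pdmix3 _ _ _
      | exact pdBB3 φ hφ _ _ _ _

include hφ in
theorem pdRF5 (c : Fin 3) (a b : Fin 6) (p : Fin 6 → ℝ) : pd (5:Fin 6) (RF φ c a b) p = 0 := by
  unfold RF; split_ifs <;>
    first
      | exact pd_zero _ _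
      | exact pdmix5 _ _ _
      | exact pdBB5 φ hφ _ _ _ _

include hφ in
theorem pdRF4 (a b : Fin 6) (p : Fin 6 → ℝ) : pd (4:Fin 6) (RF φ 1 a b) p = 0 := by
  unfold RF; split_ifs <;>
    first
      | exact pd_zero _ _
      | exact pdmix4 _ _ _
      | exact pdBB4 φ hφ _ _ _

-- ---------- curvature zero lemmas ----------
theorem Cz0 (i j k : Fin 6) : curv (Gam φ) 0 i j k = 0 := by
  funext p
  simp only [curv, G0, pd_zero, Pi.zero_apply, zero_mul, mul_zero, sub_zero, zero_sub,
    neg_zero, add_zero, zero_add, sub_self, Finset.sum_const_zero]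

theorem Cz2 (i j k : Fin 6) : curv (Gam φ) 2 i j k = 0 := by
  funext p
  simp only [curv, G2, pd_zero, Pi.zero_apply, zero_mul, mul_zero, sub_zero, zero_sub,
    neg_zero, add_zero, zero_add, sub_self, Finset.sum_const_zero]

theorem Cz1_1 (j k : Fin 6) : curv (Gam φ) 1 1 j k = 0 := by
  funext p
  simp only [curv, Fin.sum_univ_six, G0, G2, G1, gb1_r1, gb1_r3, gb1_r4, gb1_r5,
    gb1_l1, gb1_l3, gb1_l4, gb1_l5, pdgb1_1, pd_zero, Pi.zero_apply, mul_zero, zero_mul,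
    sub_zero, zero_sub, sub_self, add_zero, zero_add, neg_zero]

theorem Cz1_3 (j k : Fin 6) : curv (Gam φ) 1 3 j k = 0 := by
  funext p
  simp only [curv, Fin.sum_univ_six, G0, G2, G1, gb1_r1, gb1_r3, gb1_r4, gb1_r5,
    gb1_l1, gb1_l3, gb1_l4, gb1_l5, pdgb1_3, pd_zero, Pi.zero_apply, mul_zero, zero_mul,
    sub_zero, zero_sub, sub_self, add_zero, zero_add, neg_zero]

theorem Cz1_4 (j k : Fin 6) : curv (Gam φ) 1 4 j k = 0 := by
  funext p
  simp only [curv, Fin.sum_univ_six, G0, G2, G1, gb1_r1, gb1_r3, gb1_r4, gb1_r5,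
    gb1_l1, gb1_l3, gb1_l4, gb1_l5, pdgb1_4, pd_zero, Pi.zero_apply, mul_zero, zero_mul,
    sub_zero, zero_sub, sub_self, add_zero, zero_add, neg_zero]

theorem Cz1_5 (j k : Fin 6) : curv (Gam φ) 1 5 j k = 0 := by
  funext p
  simp only [curv, Fin.sum_univ_six, G0, G2, G1, gb1_r1, gb1_r3, gb1_r4, gb1_r5,
    gb1_l1, gb1_l3, gb1_l4, gb1_l5, pdgb1_5, pd_zero, Pi.zero_apply, mul_zero, zero_mul,
    sub_zero, zero_sub, sub_self, add_zero, zero_add, neg_zero]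

include hφ in
theorem Czf3_3 (j k : Fin 6) : curv (Gam φ) 3 3 j k = 0 := by
  funext p
  simp only [curv, G3, RF_a3, Gam_a3, pdRF3 φ hφ, pd_zero, Pi.zero_apply, mul_zero,
    zero_mul, sub_zero, zero_sub, sub_self, neg_zero, add_zero, zero_add,
    Finset.sum_const_zero]

include hφ in
theorem Czf3_4 (j k : Fin 6) : curv (Gam φ) 4 3 j k = 0 := by
  funext p
  simp only [curv, G4, RF_a3, Gam_a3, pdRF3 φ hφ, pd_zero, Pi.zero_apply, mul_zero,
    zero_mul, sub_zero, zero_sub, sub_self, neg_zero, add_zero, zero_add,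
    Finset.sum_const_zero]

include hφ in
theorem Czf3_5 (j k : Fin 6) : curv (Gam φ) 5 3 j k = 0 := by
  funext p
  simp only [curv, G5, RF_a3, Gam_a3, pdRF3 φ hφ, pd_zero, Pi.zero_apply, mul_zero,
    zero_mul, sub_zero, zero_sub, sub_self, neg_zero, add_zero, zero_add,
    Finset.sum_const_zero]

include hφ in
theorem Czf5_3 (j k : Fin 6) : curv (Gam φ) 3 5 j k = 0 := by
  funext p
  simp only [curv, G3, RF_a5, Gam_a5, pdRF5 φ hφ, pd_zero, Pi.zero_apply, mul_zero,
    zero_mul, sub_zero, zero_sub, sub_self, neg_zero, add_zero, zero_add,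
    Finset.sum_const_zero]

include hφ in
theorem Czf5_4 (j k : Fin 6) : curv (Gam φ) 4 5 j k = 0 := by
  funext p
  simp only [curv, G4, RF_a5, Gam_a5, pdRF5 φ hφ, pd_zero, Pi.zero_apply, mul_zero,
    zero_mul, sub_zero, zero_sub, sub_self, neg_zero, add_zero, zero_add,
    Finset.sum_const_zero]

include hφ in
theorem Czf5_5 (j k : Fin 6) : curv (Gam φ) 5 5 j k = 0 := by
  funext p
  simp only [curv, G5, RF_a5, Gam_a5, pdRF5 φ hφ, pd_zero, Pi.zero_apply, mul_zero,
    zero_mul, sub_zero, zero_sub, sub_self, neg_zero, add_zero, zero_add,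
    Finset.sum_const_zero]

include hφ in
theorem Czf44 (j k : Fin 6) : curv (Gam φ) 4 4 j k = 0 := by
  funext p
  simp only [curv, Fin.sum_univ_six, G0, G1, G2, G4, RF_l44, RF_r44, RF_b3, RF_b5,
    gb1_r4, gb1_l4, pdRF4 φ hφ, pd_zero, Pi.zero_apply, mul_zero, zero_mul, sub_zero,
    zero_sub, sub_self, neg_zero, add_zero, zero_add, Finset.sum_const_zero]

-- ---------- covariant-derivative zero lemmas ----------
theorem Z0 (h i j k : Fin 6) (p : Fin 6 → ℝ) : covR (Gam φ) h 0 i j k p = 0 := by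
  simp only [covR, Cz0, G0, pd_zero, Pi.zero_apply, mul_zero, zero_mul, sub_zero,
    zero_sub, sub_self, neg_zero, add_zero, zero_add, Finset.sum_const_zero]

theorem Z2 (h i j k : Fin 6) (p : Fin 6 → ℝ) : covR (Gam φ) h 2 i j k p = 0 := by
  simp only [covR, Cz2, G2, pd_zero, Pi.zero_apply, mul_zero, zero_mul, sub_zero,
    zero_sub, sub_self, neg_zero, add_zero, zero_add, Finset.sum_const_zero]

theorem Z1_1 (h j k : Fin 6) (p : Fin 6 → ℝ) : covR (Gam φ) h 1 1 j k p = 0 := by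
  simp only [covR, Fin.sum_univ_six, Cz1_1, Cz1_3, Cz1_4, Cz1_5, Cz0, Cz2, G0, G2, G1,
    gb1_r1, gb1_r3, gb1_r4, gb1_r5, pd_zero, Pi.zero_apply, mul_zero, zero_mul, sub_zero,
    zero_sub, sub_self, neg_zero, add_zero, zero_add, Finset.sum_const_zero]

theorem Z1_3 (h j k : Fin 6) (p : Fin 6 → ℝ) : covR (Gam φ) h 1 3 j k p = 0 := by
  simp only [covR, Fin.sum_univ_six, Cz1_3, Cz1_4, Cz1_5, Cz0, Cz2, G0, G2, G1,
    gb1_r1, gb1_r3, gb1_r4, gb1_r5, pd_zero, Pi.zero_apply, mul_zero, zero_mul, sub_zero,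
    zero_sub, sub_self, neg_zero, add_zero, zero_add, Finset.sum_const_zero]

theorem Z1_4 (h j k : Fin 6) (p : Fin 6 → ℝ) : covR (Gam φ) h 1 4 j k p = 0 := by
  simp only [covR, Fin.sum_univ_six, Cz1_3, Cz1_4, Cz1_5, Cz0, Cz2, G0, G2, G1,
    gb1_r1, gb1_r3, gb1_r4, gb1_r5, pd_zero, Pi.zero_apply, mul_zero, zero_mul, sub_zero,
    zero_sub, sub_self, neg_zero, add_zero, zero_add, Finset.sum_const_zero]

theorem Z1_5 (h j k : Fin 6) (p : Fin 6 → ℝ) : covR (Gam φ) h 1 5 j k p = 0 := by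
  simp only [covR, Fin.sum_univ_six, Cz1_3, Cz1_4, Cz1_5, Cz0, Cz2, G0, G2, G1,
    gb1_r1, gb1_r3, gb1_r4, gb1_r5, pd_zero, Pi.zero_apply, mul_zero, zero_mul, sub_zero,
    zero_sub, sub_self, neg_zero, add_zero, zero_add, Finset.sum_const_zero]

include hφ in
theorem Zf3_3 (h j k : Fin 6) (p : Fin 6 → ℝ) : covR (Gam φ) h 3 3 j k p = 0 := by
  simp only [covR, Fin.sum_univ_six, Czf3_3 φ hφ, Czf3_4 φ hφ, Czf3_5 φ hφ, Cz1_3,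
    Cz0, Cz2, Gam_b3, G3, G4, G5, RF_b3, pd_zero, Pi.zero_apply, mul_zero, zero_mul,
    sub_zero, zero_sub, sub_self, neg_zero, add_zero, zero_add, Finset.sum_const_zero]

include hφ in
theorem Zf3_4 (h j k : Fin 6) (p : Fin 6 → ℝ) : covR (Gam φ) h 4 3 j k p = 0 := by
  simp only [covR, Fin.sum_univ_six, Czf3_3 φ hφ, Czf3_4 φ hφ, Czf3_5 φ hφ, Cz1_3,
    Cz0, Cz2, Gam_b3, G3, G4, G5, RF_b3, pd_zero, Pi.zero_apply, mul_zero, zero_mul,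
    sub_zero, zero_sub, sub_self, neg_zero, add_zero, zero_add, Finset.sum_const_zero]

include hφ in
theorem Zf3_5 (h j k : Fin 6) (p : Fin 6 → ℝ) : covR (Gam φ) h 5 3 j k p = 0 := by
  simp only [covR, Fin.sum_univ_six, Czf3_3 φ hφ, Czf3_4 φ hφ, Czf3_5 φ hφ, Cz1_3,
    Cz0, Cz2, Gam_b3, G3, G4, G5, RF_b3, pd_zero, Pi.zero_apply, mul_zero, zero_mul,
    sub_zero, zero_sub, sub_self, neg_zero, add_zero, zero_add, Finset.sum_const_zero]

include hφ in
theorem Zf5_3 (h j k : Fin 6) (p : Fin 6 → ℝ) : covR (Gam φ) h 3 5 j k p = 0 := by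
  simp only [covR, Fin.sum_univ_six, Czf5_3 φ hφ, Czf5_4 φ hφ, Czf5_5 φ hφ, Cz1_5,
    Cz0, Cz2, Gam_b5, G3, G4, G5, RF_b5, pd_zero, Pi.zero_apply, mul_zero, zero_mul,
    sub_zero, zero_sub, sub_self, neg_zero, add_zero, zero_add, Finset.sum_const_zero]

include hφ in
theorem Zf5_4 (h j k : Fin 6) (p : Fin 6 → ℝ) : covR (Gam φ) h 4 5 j k p = 0 := by
  simp only [covR, Fin.sum_univ_six, Czf5_3 φ hφ, Czf5_4 φ hφ, Czf5_5 φ hφ, Cz1_5,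
    Cz0, Cz2, Gam_b5, G3, G4, G5, RF_b5, pd_zero, Pi.zero_apply, mul_zero, zero_mul,
    sub_zero, zero_sub, sub_self, neg_zero, add_zero, zero_add, Finset.sum_const_zero]

include hφ in
theorem Zf5_5 (h j k : Fin 6) (p : Fin 6 → ℝ) : covR (Gam φ) h 5 5 j k p = 0 := by
  simp only [covR, Fin.sum_univ_six, Czf5_3 φ hφ, Czf5_4 φ hφ, Czf5_5 φ hφ, Cz1_5,
    Cz0, Cz2, Gam_b5, G3, G4, G5, RF_b5, pd_zero, Pi.zero_apply, mul_zero, zero_mul,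
    sub_zero, zero_sub, sub_self, neg_zero, add_zero, zero_add, Finset.sum_const_zero]

include hφ in
theorem Z44 (h j k : Fin 6) (p : Fin 6 → ℝ) : covR (Gam φ) h 4 4 j k p = 0 := by
  simp only [covR, Fin.sum_univ_six, Czf44 φ hφ, Czf3_4 φ hφ, Czf5_4 φ hφ, Cz1_4,
    Cz0, Cz2, G0, G1, G2, G4, RF_l44, RF_r44, RF_b3, RF_b5, gb1_r4, pd_zero,
    Pi.zero_apply, mul_zero, zero_mul, sub_zero, zero_sub, sub_self, neg_zero,
    add_zero, zero_add, Finset.sum_const_zero]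

-- ---------- zero entries of the Szabó operator ----------
theorem M0 (u X : Fin 6 → ℝ) (i : Fin 6) : szabo (Gam φ) u X 0 i = 0 := by
  simp only [szabo, Matrix.of_apply]
  refine Finset.sum_eq_zero fun h _ => Finset.sum_eq_zero fun j _ =>
    Finset.sum_eq_zero fun k _ => ?_
  rw [Z0 φ h i j k u, mul_zero]

theorem M2 (u X : Fin 6 → ℝ) (i : Fin 6) : szabo (Gam φ) u X 2 i = 0 := by
  simp only [szabo, Matrix.of_apply]
  refine Finset.sum_eq_zero fun h _ => Finset.sum_eq_zero fun j _ =>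
    Finset.sum_eq_zero fun k _ => ?_
  rw [Z2 φ h i j k u, mul_zero]

theorem M1_1 (u X : Fin 6 → ℝ) : szabo (Gam φ) u X 1 1 = 0 := by
  simp only [szabo, Matrix.of_apply]
  refine Finset.sum_eq_zero fun h _ => Finset.sum_eq_zero fun j _ =>
    Finset.sum_eq_zero fun k _ => ?_
  rw [Z1_1 φ h j k u, mul_zero]

theorem M1_3 (u X : Fin 6 → ℝ) : szabo (Gam φ) u X 1 3 = 0 := by
  simp only [szabo, Matrix.of_apply]
  refine Finset.sum_eq_zero fun h _ => Finset.sum_eq_zero fun j _ =>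
    Finset.sum_eq_zero fun k _ => ?_
  rw [Z1_3 φ h j k u, mul_zero]

theorem M1_4 (u X : Fin 6 → ℝ) : szabo (Gam φ) u X 1 4 = 0 := by
  simp only [szabo, Matrix.of_apply]
  refine Finset.sum_eq_zero fun h _ => Finset.sum_eq_zero fun j _ =>
    Finset.sum_eq_zero fun k _ => ?_
  rw [Z1_4 φ h j k u, mul_zero]

theorem M1_5 (u X : Fin 6 → ℝ) : szabo (Gam φ) u X 1 5 = 0 := by
  simp only [szabo, Matrix.of_apply]
  refine Finset.sum_eq_zero fun h _ => Finset.sum_eq_zero fun j _ =>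
    Finset.sum_eq_zero fun k _ => ?_
  rw [Z1_5 φ h j k u, mul_zero]

include hφ in
theorem M3_3 (u X : Fin 6 → ℝ) : szabo (Gam φ) u X 3 3 = 0 := by
  simp only [szabo, Matrix.of_apply]
  refine Finset.sum_eq_zero fun h _ => Finset.sum_eq_zero fun j _ =>
    Finset.sum_eq_zero fun k _ => ?_
  rw [Zf3_3 φ hφ h j k u, mul_zero]

include hφ in
theorem M4_3 (u X : Fin 6 → ℝ) : szabo (Gam φ) u X 4 3 = 0 := by
  simp only [szabo, Matrix.of_apply]
  refine Finset.sum_eq_zero fun h _ => Finset.sum_eq_zero fun j _ =>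
    Finset.sum_eq_zero fun k _ => ?_
  rw [Zf3_4 φ hφ h j k u, mul_zero]

include hφ in
theorem M5_3 (u X : Fin 6 → ℝ) : szabo (Gam φ) u X 5 3 = 0 := by
  simp only [szabo, Matrix.of_apply]
  refine Finset.sum_eq_zero fun h _ => Finset.sum_eq_zero fun j _ =>
    Finset.sum_eq_zero fun k _ => ?_
  rw [Zf3_5 φ hφ h j k u, mul_zero]

include hφ in
theorem M3_5 (u X : Fin 6 → ℝ) : szabo (Gam φ) u X 3 5 = 0 := by
  simp only [szabo, Matrix.of_apply]
  refine Finset.sum_eq_zero fun h _ => Finset.sum_eq_zero fun j _ =>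
    Finset.sum_eq_zero fun k _ => ?_
  rw [Zf5_3 φ hφ h j k u, mul_zero]

include hφ in
theorem M4_5 (u X : Fin 6 → ℝ) : szabo (Gam φ) u X 4 5 = 0 := by
  simp only [szabo, Matrix.of_apply]
  refine Finset.sum_eq_zero fun h _ => Finset.sum_eq_zero fun j _ =>
    Finset.sum_eq_zero fun k _ => ?_
  rw [Zf5_4 φ hφ h j k u, mul_zero]

include hφ in
theorem M5_5 (u X : Fin 6 → ℝ) : szabo (Gam φ) u X 5 5 = 0 := by
  simp only [szabo, Matrix.of_apply]
  refine Finset.sum_eq_zero fun h _ => Finset.sum_eq_zero fun j _ =>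
    Finset.sum_eq_zero fun k _ => ?_
  rw [Zf5_5 φ hφ h j k u, mul_zero]

include hφ in
theorem M4_4 (u X : Fin 6 → ℝ) : szabo (Gam φ) u X 4 4 = 0 := by
  simp only [szabo, Matrix.of_apply]
  refine Finset.sum_eq_zero fun h _ => Finset.sum_eq_zero fun j _ =>
    Finset.sum_eq_zero fun k _ => ?_
  rw [Z44 φ hφ h j k u, mul_zero]

end
end S15


/-- for arbitrary smooth symmetric `φᵢⱼ`, the twisted Riemannian extension
metric `gSixTwist φ` on `ℝ⁶` has Szabó operators with characteristic polynomial `λ⁶` at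
every point and in every direction: it is a pseudo-Riemannian Szabó metric of signature
`(3,3)` with only zero eigenvalues. -/
theorem stmt_15 (φ : Fin 3 → Fin 3 → (Fin 3 → ℝ) → ℝ)
    (hφsmooth : ∀ i j, ContDiff ℝ (⊤ : ℕ∞) (φ i j))
    (hφsym : ∀ i j, φ i j = φ j i) :
    ∀ (u : Fin 6 → ℝ) (X : Fin 6 → ℝ),
      (szabo (christoffel (gSixTwist φ)) u X).charpoly = Polynomial.X ^ 6 := by
  intro u X
  rw [S15.hGam φ hφsmooth]
  set M := szabo (S15.Gam φ) u X with hMdef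
  have r0 : ∀ i, M 0 i = 0 := S15.M0 φ u X
  have r2 : ∀ i, M 2 i = 0 := S15.M2 φ u X
  have z11 : M 1 1 = 0 := S15.M1_1 φ u X
  have z13 : M 1 3 = 0 := S15.M1_3 φ u X
  have z14 : M 1 4 = 0 := S15.M1_4 φ u X
  have z15 : M 1 5 = 0 := S15.M1_5 φ u X
  have z44 : M 4 4 = 0 := S15.M4_4 φ hφsmooth u X
  have c3 : ∀ l, M l 3 = 0 := by
    intro l
    fin_cases l
    · exact r0 3
    · exact z13
    · exact r2 3
    · exact S15.M3_3 φ hφsmooth u X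
    · exact S15.M4_3 φ hφsmooth u X
    · exact S15.M5_3 φ hφsmooth u X
  have c5 : ∀ l, M l 5 = 0 := by
    intro l
    fin_cases l
    · exact r0 5
    · exact z15
    · exact r2 5
    · exact S15.M3_5 φ hφsmooth u X
    · exact S15.M4_5 φ hφsmooth u X
    · exact S15.M5_5 φ hφsmooth u X
  have A0 : ∀ b, (M * M) 0 b = 0 := fun b => by
    rw [Matrix.mul_apply, Fin.sum_univ_six]
    simp [r0]
  have A1 : ∀ b, (M * M) 1 b = 0 := fun b => by
    rw [Matrix.mul_apply, Fin.sum_univ_six]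
    simp [r0, r2, z11, z13, z14, z15]
  have A2 : ∀ b, (M * M) 2 b = 0 := fun b => by
    rw [Matrix.mul_apply, Fin.sum_univ_six]
    simp [r2]
  have B3 : ∀ a, (M * M) a 3 = 0 := fun a => by
    rw [Matrix.mul_apply, Fin.sum_univ_six]
    simp [c3]
  have B5 : ∀ a, (M * M) a 5 = 0 := fun a => by
    rw [Matrix.mul_apply, Fin.sum_univ_six]
    simp [c5]
  have B4 : ∀ a, (M * M) a 4 = 0 := fun a => by
    rw [Matrix.mul_apply, Fin.sum_univ_six]
    simp [r0 4, r2 4, z14, z44, c3 a, c5 a]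
  have h4 : M ^ 4 = 0 := by
    have e : M ^ 4 = (M * M) * (M * M) := by
      rw [show (4:ℕ) = 2 + 2 from rfl, pow_add, pow_two]
    rw [e]
    ext a b
    rw [Matrix.mul_apply, Fin.sum_univ_six]
    simp [A0, A1, A2, B3 a, B4 a, B5 a]
  have hnil := Matrix.isNilpotent_charpoly_sub_pow_of_isNilpotent (⟨4, h4⟩ : IsNilpotent M)
  simpa [sub_eq_zero, Fintype.card_fin] using hnil.eq_zero
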